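/- Define γ_{i,u}(z) = (1 - q₃q₁^i u/z)(1 - q₂q₁^i u/z) / ((1 - q₁^{i-1}u/z)(1 - q₁^i u/z)) with q₁q₂q₃ = 1. Then for all integers a_s, a_t and parameters u_s, u_t (such that all values are defined): γ_{a_t,u_t}(q₁^{a_s-1}u_s) · γ_{a_s-1,u_s}(q₁^{a_t}u_t) = γ_{a_s,u_s}(q₁^{a_t}u_t) · γ_{a_t+1,u_t}(q₁^{a_s-1}u_s). -/

import Mathlib

/-- `γ_{i,u}(z) = (1-q₃q₁^i u/z)(1-q₂q₁^i u/z)/((1-q₁^{i-1}u/z)(1-q₁^i u/z))`. -/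
noncomputable def gam (q₁ q₂ q₃ : ℂ) (i : ℤ) (u z : ℂ) : ℂ :=
  ((1 - q₃ * q₁ ^ i * u / z) * (1 - q₂ * q₁ ^ i * u / z)) /
    ((1 - q₁ ^ (i - 1) * u / z) * (1 - q₁ ^ i * u / z))

set_option maxHeartbeats 4000000 in
/-- The exchange identity
`γ_{aₜ,uₜ}(q₁^{aₛ-1}uₛ) γ_{aₛ-1,uₛ}(q₁^{aₜ}uₜ)
  = γ_{aₛ,uₛ}(q₁^{aₜ}uₜ) γ_{aₜ+1,uₜ}(q₁^{aₛ-1}uₛ)`,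
valid whenever all four values are defined. -/
theorem stmt4 (q₁ q₂ q₃ : ℂ) (h₁ : q₁ ≠ 0) (h₂ : q₂ ≠ 0) (h₃ : q₃ ≠ 0)
    (hq : q₁ * q₂ * q₃ = 1) (aₛ aₜ : ℤ) (uₛ uₜ : ℂ) (huₛ : uₛ ≠ 0) (huₜ : uₜ ≠ 0)
    (hd1 : (1 - q₁ ^ (aₜ - 1) * uₜ / (q₁ ^ (aₛ - 1) * uₛ))
            * (1 - q₁ ^ aₜ * uₜ / (q₁ ^ (aₛ - 1) * uₛ)) ≠ 0)
    (hd2 : (1 - q₁ ^ (aₛ - 2) * uₛ / (q₁ ^ aₜ * uₜ))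
            * (1 - q₁ ^ (aₛ - 1) * uₛ / (q₁ ^ aₜ * uₜ)) ≠ 0)
    (hd3 : (1 - q₁ ^ (aₛ - 1) * uₛ / (q₁ ^ aₜ * uₜ))
            * (1 - q₁ ^ aₛ * uₛ / (q₁ ^ aₜ * uₜ)) ≠ 0)
    (hd4 : (1 - q₁ ^ aₜ * uₜ / (q₁ ^ (aₛ - 1) * uₛ))
            * (1 - q₁ ^ (aₜ + 1) * uₜ / (q₁ ^ (aₛ - 1) * uₛ)) ≠ 0) :
    gam q₁ q₂ q₃ aₜ uₜ (q₁ ^ (aₛ - 1) * uₛ) * gam q₁ q₂ q₃ (aₛ - 1) uₛ (q₁ ^ aₜ * uₜ)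
      = gam q₁ q₂ q₃ aₛ uₛ (q₁ ^ aₜ * uₜ) * gam q₁ q₂ q₃ (aₜ + 1) uₜ (q₁ ^ (aₛ - 1) * uₛ) := by
  have hA : q₁ ^ aₛ ≠ 0 := zpow_ne_zero _ h₁
  have hB : q₁ ^ aₜ ≠ 0 := zpow_ne_zero _ h₁
  have hq3 : q₃ = 1 / (q₁ * q₂) := by field_simp; linear_combination hq
  unfold gam
  rw [show aₛ - 1 - 1 = aₛ - 2 by ring, show aₜ + 1 - 1 = aₜ by ring,
    div_mul_div_comm, div_mul_div_comm,
    div_eq_div_iff (mul_ne_zero hd1 hd2) (mul_ne_zero hd3 hd4)]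
  simp only [zpow_sub₀ h₁, zpow_add₀ h₁, zpow_one, zpow_two]
  subst hq3
  have hp2 : q₁ ^ 2 * (q₁ ^ aₜ * uₜ) ≠ 0 :=
    mul_ne_zero (pow_ne_zero _ h₁) (mul_ne_zero hB huₜ)
  have hp3 : q₁ ^ (2:ℤ) ≠ 0 := zpow_ne_zero _ h₁
  have hp4 : q₁ ^ (2:ℤ) * (q₁ ^ aₜ * uₜ) ≠ 0 := mul_ne_zero hp3 (mul_ne_zero hB huₜ)
  field_simp [hA, hB, huₛ, huₜ, h₁, h₂, hp2, hp3, hp4]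
  generalize q₁ ^ aₛ = A
  generalize q₁ ^ aₜ = B
  ring
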